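/- Let f be defined by f(x) = n for x in [(1+1/n)·2^n, (1+2/n)·2^n] (n ≥ 1) and f(x) = 1 otherwise. Then for every x > 0, lim_{n→∞} f(2^n x) = 1, but f is unbounded. -/

import Mathlib

open Filter Set

/-- The counterexample function: `f x = n` on the interval
`[(1+1/n)·2^n, (1+2/n)·2^n]` (largest such `n` if several apply), and `1` otherwise. -/
noncomputable def exf (x : ℝ) : ℝ :=
  sSup (insert (1:ℝ)
    {y : ℝ | ∃ n : ℕ, 1 ≤ n ∧ y = (n:ℝ) ∧
      x ∈ Set.Icc ((1 + 1/(n:ℝ)) * 2^n) ((1 + 2/(n:ℝ)) * 2^n)})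

lemma exf_bdd (x : ℝ) : BddAbove (insert (1:ℝ)
    {y : ℝ | ∃ n : ℕ, 1 ≤ n ∧ y = (n:ℝ) ∧
      x ∈ Set.Icc ((1 + 1/(n:ℝ)) * 2^n) ((1 + 2/(n:ℝ)) * 2^n)}) := by
  refine ⟨max 1 x, ?_⟩
  rintro y (rfl | ⟨n, hn, rfl, hx⟩)
  · exact le_max_left _ _
  · refine le_max_of_le_right ?_
    have h2n : (n:ℝ) ≤ 2^n := by exact_mod_cast (Nat.lt_two_pow_self (n := n)).le
    have hpos : (0:ℝ) < 2^n := by positivity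
    have hnn : (0:ℝ) ≤ 1/(n:ℝ) := by positivity
    calc (n:ℝ) ≤ 2^n := h2n
      _ ≤ (1 + 1/(n:ℝ)) * 2^n := by nlinarith
      _ ≤ x := hx.1

theorem statement_0 :
    (∀ x : ℝ, 0 < x →
      Filter.Tendsto (fun n : ℕ => exf (2^n * x)) Filter.atTop (nhds 1)) ∧
    (∀ M : ℝ, ∃ x : ℝ, 0 ≤ x ∧ M < exf x) := by
  constructor
  · intro x hx
    obtain ⟨j, hj1, hj2⟩ := exists_mem_Ioc_zpow hx one_lt_two
    set δ : ℝ := min (1/2) ((x / 2^j - 1)/2) with hδdef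
    have h2j : (0:ℝ) < 2^j := zpow_pos two_pos j
    have hr1 : 1 < x / 2^j := (one_lt_div h2j).2 hj1
    have hδpos : 0 < δ := lt_min (by norm_num) (by linarith)
    have hδhalf : δ ≤ 1/2 := min_le_left _ _
    have key : ∀ k : ℤ, ¬ (1 < x / 2^k ∧ x / 2^k ≤ 1 + δ) := by
      rintro k ⟨h1, h2⟩
      have h2k : (0:ℝ) < 2^k := zpow_pos two_pos k
      have hk1 : (2:ℝ)^k < x := (one_lt_div h2k).1 h1
      have hk2 : x ≤ (3/2) * 2^k := by
        have := (div_le_iff₀ h2k).1 h2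
        nlinarith
      have hkj : k = j := by
        have a1 : (2:ℝ)^j < 2^(k+1) := by
          rw [zpow_add₀ (two_ne_zero), zpow_one]
          nlinarith
        have hj2' : x ≤ 2^j * 2 := by
          rw [zpow_add₀ (two_ne_zero), zpow_one] at hj2; exact hj2
        have a2 : (2:ℝ)^k < 2^(j+1) := by
          rw [zpow_add₀ (two_ne_zero), zpow_one]
          linarith
        have b1 : j < k + 1 := (zpow_lt_zpow_iff_right₀ one_lt_two).1 a1
        have b2 : k < j + 1 := (zpow_lt_zpow_iff_right₀ one_lt_two).1 a2
        omega
      subst hkj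
      have hmin : δ ≤ (x / 2^k - 1)/2 := min_le_right _ _
      linarith
    -- choose N
    set K : ℕ := ⌈2/δ⌉₊ with hK
    have hKge : 2/δ ≤ (K:ℝ) := Nat.le_ceil _
    obtain ⟨N, hN⟩ : ∃ N : ℕ, 3 * 2^K < 2^N * x := by
      have h := Filter.Tendsto.atTop_mul_const hx
        (tendsto_pow_atTop_atTop_of_one_lt (one_lt_two (α := ℝ)))
      have := (h.eventually_gt_atTop (3 * 2^K)).exists
      obtain ⟨N, hN⟩ := this
      exact ⟨N, hN⟩
    have hempty : ∀ n : ℕ, N ≤ n → exf (2^n * x) = 1 := by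
      intro n hn
      have hset : {y : ℝ | ∃ m : ℕ, 1 ≤ m ∧ y = (m:ℝ) ∧
          2^n * x ∈ Set.Icc ((1 + 1/(m:ℝ)) * 2^m) ((1 + 2/(m:ℝ)) * 2^m)} = ∅ := by
        rw [Set.eq_empty_iff_forall_notMem]
        rintro y ⟨m, hm, rfl, hlo, hhi⟩
        have hmpos : (0:ℝ) < m := by exact_mod_cast hm
        have hA : (0:ℝ) < 2^m := by positivity
        have hB : (0:ℝ) < 2^n := by positivity
        -- m > K
        have hmono : (2:ℝ)^N * x ≤ 2^n * x :=
          mul_le_mul_of_nonneg_right (pow_le_pow_right₀ one_le_two hn) hx.le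
        have hm1 : (1:ℝ) ≤ m := by exact_mod_cast hm
        have h2m : 2/(m:ℝ) ≤ 2 := by
          rw [div_le_iff₀ hmpos]; linarith
        have hup : (1 + 2/(m:ℝ)) * 2^m ≤ 3 * 2^m := by nlinarith
        have h3 : (3:ℝ) * 2^K < 3 * 2^m := by linarith
        have hKm : K < m := by
          have h4 : (2:ℝ)^K < 2^m := by linarith
          exact (pow_lt_pow_iff_right₀ one_lt_two).1 h4
        have hmδ : 2/(m:ℝ) ≤ δ := by
          have h1 : 2/δ < (m:ℝ) := lt_of_le_of_lt hKge (by exact_mod_cast hKm)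
          rw [div_le_iff₀ hmpos]
          rw [div_lt_iff₀ hδpos] at h1
          linarith
        -- the ratio
        have hzpow : (2:ℝ)^((m:ℤ) - (n:ℤ)) = 2^m / 2^n := by
          rw [zpow_sub₀ (two_ne_zero), zpow_natCast, zpow_natCast]
        have hrval : x / 2^((m:ℤ) - (n:ℤ)) = 2^n * x / 2^m := by
          rw [hzpow]; field_simp
        refine key ((m:ℤ) - (n:ℤ)) ⟨?_, ?_⟩
        · rw [hrval, lt_div_iff₀ hA]
          have : (1:ℝ) * 2^m < (1 + 1/(m:ℝ)) * 2^m := by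
            have : (0:ℝ) < 1/(m:ℝ) := by positivity
            nlinarith
          linarith [hlo]
        · rw [hrval, div_le_iff₀ hA]
          have : (1 + 2/(m:ℝ)) * 2^m ≤ (1 + δ) * 2^m := by nlinarith
          linarith [hhi]
      rw [exf, hset, show insert (1:ℝ) (∅ : Set ℝ) = {1} by ext y; simp]
      exact csSup_singleton _
    have hev : ∀ᶠ n in atTop, (1:ℝ) = exf (2^n * x) :=
      eventually_atTop.2 ⟨N, fun n hn => (hempty n hn).symm⟩
    exact Tendsto.congr' hev tendsto_const_nhds
  · intro M
    set n : ℕ := ⌈M⌉₊ + 1 with hn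
    have hn1 : 1 ≤ n := by omega
    have hMn : M < (n:ℝ) := by
      calc M ≤ (⌈M⌉₊:ℝ) := Nat.le_ceil _
        _ < (n:ℝ) := by exact_mod_cast Nat.lt_succ_self _
    refine ⟨(1 + 1/(n:ℝ)) * 2^n, by positivity, ?_⟩
    have hmem : (n:ℝ) ∈ insert (1:ℝ)
        {y : ℝ | ∃ m : ℕ, 1 ≤ m ∧ y = (m:ℝ) ∧
          (1 + 1/(n:ℝ)) * 2^n ∈ Set.Icc ((1 + 1/(m:ℝ)) * 2^m) ((1 + 2/(m:ℝ)) * 2^m)} := by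
      refine Set.mem_insert_of_mem _ ⟨n, hn1, rfl, le_refl _, ?_⟩
      have hmpos : (0:ℝ) < n := by exact_mod_cast hn1
      have h12 : (1:ℝ)/n ≤ 2/n := by
        rw [div_le_div_iff₀ hmpos hmpos]; nlinarith
      exact mul_le_mul_of_nonneg_right (by linarith) (by positivity)
    have := le_csSup (exf_bdd ((1 + 1/(n:ℝ)) * 2^n)) hmem
    calc M < (n:ℝ) := hMn
      _ ≤ exf ((1 + 1/(n:ℝ)) * 2^n) := this
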